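/- Under the κ-smoothness assumption with κγ < 1 and the (π_b, e_P, ε)-constraint, the single Bellman induction step holds: if |Q*_t(x,a) − Q̂_t(x,a)| ≤ (e_P(x,a)/(1−κγ) + γε/((1−γ)(1−κγ)))V_max for all (x,a), then applying the respective Bellman operators for π in M* and M̂, the same bound holds for Q*_{t+1} = B*(Q*_t) and Q̂_{t+1} = B̂(Q̂_t), i.e., |Q*_{t+1}(x,a) − Q̂_{t+1}(x,a)| ≤ (e_P(x,a)/(1−κγ) + γε/((1−γ)(1−κγ)))V_max for all (x,a). -/

import Mathlib

/-- Single Bellman induction step in the proof of Soft-SPIBB's Lemma 1: if the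
bound holds for `(Q*_t, Q̂_t)`, it holds after applying the respective Bellman
operators for `π` in `M*` and `M̂`. -/
theorem soft_spibb_induction_step
    {X A : Type*} [Fintype X] [Fintype A]
    (Pstar Phat : X → A → X → ℝ) (Rstar Rhat : X → A → ℝ)
    (γ Rmax Vmax κ ε : ℝ) (eP : X → A → ℝ)
    (hγ0 : 0 ≤ γ) (hγ1 : γ < 1)
    (hRmax : 0 ≤ Rmax) (hRV : Rmax ≤ (1 - γ) * Vmax)
    (hκ0 : 0 ≤ κ) (hκγ : κ * γ < 1) (hε : 0 ≤ ε)
    (heP : ∀ x a, 0 ≤ eP x a)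
    (hPsnn : ∀ x a x', 0 ≤ Pstar x a x') (hPssum : ∀ x a, ∑ x', Pstar x a x' = 1)
    (hPhnn : ∀ x a x', 0 ≤ Phat x a x') (hPhsum : ∀ x a, ∑ x', Phat x a x' = 1)
    (hPerr : ∀ x a, ∑ x', |Pstar x a x' - Phat x a x'| ≤ eP x a)
    (hRerr : ∀ x a, |Rstar x a - Rhat x a| ≤ eP x a * Rmax)
    (π πb : X → A → ℝ)
    (hπnn : ∀ x a, 0 ≤ π x a) (hπsum : ∀ x, ∑ a, π x a = 1)
    (hπbnn : ∀ x a, 0 ≤ πb x a) (hπbsum : ∀ x, ∑ a, πb x a = 1)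
    (hsmooth : ∀ x a, ∑ x', ∑ a', eP x' a' * πb x' a' * Pstar x a x' ≤ κ * eP x a)
    (hcon : ∀ x, ∑ a, eP x a * |π x a - πb x a| ≤ ε)
    (Qs Qh : X → A → ℝ)
    (hQhB : ∀ x a, |Qh x a| ≤ Vmax)
    (hind : ∀ x a, |Qs x a - Qh x a| ≤
      (eP x a / (1 - κ * γ) + γ * ε / ((1 - γ) * (1 - κ * γ))) * Vmax) :
    ∀ x a,
      |(Rstar x a + γ * ∑ x', Pstar x a x' * ∑ a', π x' a' * Qs x' a')
        - (Rhat x a + γ * ∑ x', Phat x a x' * ∑ a', π x' a' * Qh x' a')| ≤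
      (eP x a / (1 - κ * γ) + γ * ε / ((1 - γ) * (1 - κ * γ))) * Vmax := by
  intro x a
  have hκγ' : (0:ℝ) < 1 - κ * γ := by nlinarith
  have hγ' : (0:ℝ) < 1 - γ := by linarith
  have hV : (0:ℝ) ≤ Vmax := le_trans (abs_nonneg _) (hQhB x a)
  set D : ℝ := γ * ε / ((1 - γ) * (1 - κ * γ)) with hDdef
  have hDnn : 0 ≤ D := by positivity
  set Vs : X → ℝ := fun x' => ∑ a', π x' a' * Qs x' a' with hVs
  set Vh : X → ℝ := fun x' => ∑ a', π x' a' * Qh x' a' with hVh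
  -- |Vh| ≤ Vmax
  have hVhB : ∀ x', |Vh x'| ≤ Vmax := by
    intro x'
    calc |Vh x'| ≤ ∑ a', |π x' a' * Qh x' a'| := Finset.abs_sum_le_sum_abs _ _
    _ ≤ ∑ a', π x' a' * Vmax := by
        apply Finset.sum_le_sum; intro a' _
        rw [abs_mul, abs_of_nonneg (hπnn x' a')]
        exact mul_le_mul_of_nonneg_left (hQhB x' a') (hπnn x' a')
    _ = Vmax := by rw [← Finset.sum_mul, hπsum, one_mul]
  -- |Vs - Vh| bound
  have hΔV : ∀ x', |Vs x' - Vh x'| ≤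
      (Vmax / (1 - κ * γ)) * (∑ a', π x' a' * eP x' a') + D * Vmax := by
    intro x'
    have h1 : Vs x' - Vh x' = ∑ a', π x' a' * (Qs x' a' - Qh x' a') := by
      simp only [hVs, hVh, ← Finset.sum_sub_distrib]
      apply Finset.sum_congr rfl; intros; ring
    rw [h1]
    calc |∑ a', π x' a' * (Qs x' a' - Qh x' a')|
        ≤ ∑ a', |π x' a' * (Qs x' a' - Qh x' a')| := Finset.abs_sum_le_sum_abs _ _
      _ ≤ ∑ a', π x' a' * ((eP x' a' / (1 - κ * γ) + D) * Vmax) := by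
          apply Finset.sum_le_sum; intro a' _
          rw [abs_mul, abs_of_nonneg (hπnn x' a')]
          exact mul_le_mul_of_nonneg_left (hind x' a') (hπnn x' a')
      _ = (Vmax / (1 - κ * γ)) * (∑ a', π x' a' * eP x' a')
            + (∑ a', π x' a') * (D * Vmax) := by
          rw [Finset.mul_sum, Finset.sum_mul, ← Finset.sum_add_distrib]
          apply Finset.sum_congr rfl; intros; field_simp
      _ = (Vmax / (1 - κ * γ)) * (∑ a', π x' a' * eP x' a') + D * Vmax := by
          rw [hπsum, one_mul]
  -- π eP ≤ πb eP + |π - πb| eP pointwise, summed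
  have hπeP : ∀ x', ∑ a', π x' a' * eP x' a' ≤
      (∑ a', πb x' a' * eP x' a') + ∑ a', eP x' a' * |π x' a' - πb x' a'| := by
    intro x'
    rw [← Finset.sum_add_distrib]
    apply Finset.sum_le_sum; intro a' _
    have h2 : π x' a' - πb x' a' ≤ |π x' a' - πb x' a'| := le_abs_self _
    nlinarith [heP x' a']
  -- key propagation bound
  have key : ∑ x', Pstar x a x' * |Vs x' - Vh x'| ≤
      (Vmax / (1 - κ * γ)) * (κ * eP x a + ε) + D * Vmax := by
    calc ∑ x', Pstar x a x' * |Vs x' - Vh x'|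
        ≤ ∑ x', Pstar x a x' * ((Vmax / (1 - κ * γ)) *
            ((∑ a', πb x' a' * eP x' a') + ∑ a', eP x' a' * |π x' a' - πb x' a'|)
            + D * Vmax) := by
          apply Finset.sum_le_sum; intro x' _
          apply mul_le_mul_of_nonneg_left _ (hPsnn x a x')
          refine le_trans (hΔV x') ?_
          have := hπeP x'
          have hc : (0:ℝ) ≤ Vmax / (1 - κ * γ) := by positivity
          nlinarith
      _ = ∑ x', ((Vmax / (1 - κ * γ)) *
            ((∑ a', eP x' a' * πb x' a' * Pstar x a x')
              + Pstar x a x' * ∑ a', eP x' a' * |π x' a' - πb x' a'|)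
            + Pstar x a x' * (D * Vmax)) := by
          apply Finset.sum_congr rfl; intro x' _
          have h4 : ∑ a', eP x' a' * πb x' a' * Pstar x a x'
              = (∑ a', πb x' a' * eP x' a') * Pstar x a x' := by
            rw [Finset.sum_mul]; apply Finset.sum_congr rfl; intros; ring
          rw [h4]; ring
      _ = (Vmax / (1 - κ * γ)) *
            ((∑ x', ∑ a', eP x' a' * πb x' a' * Pstar x a x')
              + ∑ x', Pstar x a x' * ∑ a', eP x' a' * |π x' a' - πb x' a'|)
            + (∑ x', Pstar x a x') * (D * Vmax) := by
          rw [Finset.sum_add_distrib, ← Finset.mul_sum, ← Finset.sum_mul,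
            Finset.sum_add_distrib]
      _ ≤ (Vmax / (1 - κ * γ)) * (κ * eP x a + ε) + D * Vmax := by
          rw [hPssum, one_mul]
          have hc : (0:ℝ) ≤ Vmax / (1 - κ * γ) := by positivity
          have h3 : ∑ x', Pstar x a x' * ∑ a', eP x' a' * |π x' a' - πb x' a'| ≤ ε := by
            calc ∑ x', Pstar x a x' * ∑ a', eP x' a' * |π x' a' - πb x' a'|
                ≤ ∑ x', Pstar x a x' * ε := by
                  apply Finset.sum_le_sum; intro x' _
                  exact mul_le_mul_of_nonneg_left (hcon x') (hPsnn x a x')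
              _ = ε := by rw [← Finset.sum_mul, hPssum, one_mul]
          nlinarith [hsmooth x a]
  -- decomposition of the difference of sums
  have hsum : (∑ x', Pstar x a x' * Vs x') - ∑ x', Phat x a x' * Vh x'
      = (∑ x', (Pstar x a x' - Phat x a x') * Vh x')
        + ∑ x', Pstar x a x' * (Vs x' - Vh x') := by
    rw [← Finset.sum_add_distrib, ← Finset.sum_sub_distrib]
    apply Finset.sum_congr rfl; intros; ring
  have hB : |∑ x', (Pstar x a x' - Phat x a x') * Vh x'| ≤ eP x a * Vmax := by
    calc |∑ x', (Pstar x a x' - Phat x a x') * Vh x'|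
        ≤ ∑ x', |(Pstar x a x' - Phat x a x') * Vh x'| := Finset.abs_sum_le_sum_abs _ _
      _ ≤ ∑ x', |Pstar x a x' - Phat x a x'| * Vmax := by
          apply Finset.sum_le_sum; intro x' _
          rw [abs_mul]
          exact mul_le_mul_of_nonneg_left (hVhB x') (abs_nonneg _)
      _ = (∑ x', |Pstar x a x' - Phat x a x'|) * Vmax := by rw [Finset.sum_mul]
      _ ≤ eP x a * Vmax := mul_le_mul_of_nonneg_right (hPerr x a) hV
  have hC : |∑ x', Pstar x a x' * (Vs x' - Vh x')|
      ≤ ∑ x', Pstar x a x' * |Vs x' - Vh x'| := by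
    refine le_trans (Finset.abs_sum_le_sum_abs _ _) ?_
    apply Finset.sum_le_sum; intro x' _
    rw [abs_mul, abs_of_nonneg (hPsnn x a x')]
  have hA : |Rstar x a - Rhat x a| ≤ eP x a * ((1 - γ) * Vmax) :=
    le_trans (hRerr x a) (mul_le_mul_of_nonneg_left hRV (heP x a))
  show |(Rstar x a + γ * ∑ x', Pstar x a x' * Vs x')
      - (Rhat x a + γ * ∑ x', Phat x a x' * Vh x')|
      ≤ (eP x a / (1 - κ * γ) + D) * Vmax
  have expand : (Rstar x a + γ * ∑ x', Pstar x a x' * Vs x')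
      - (Rhat x a + γ * ∑ x', Phat x a x' * Vh x')
      = (Rstar x a - Rhat x a)
        + γ * ((∑ x', (Pstar x a x' - Phat x a x') * Vh x')
          + ∑ x', Pstar x a x' * (Vs x' - Vh x')) := by
    rw [← hsum]; ring
  rw [expand]
  calc |(Rstar x a - Rhat x a)
        + γ * ((∑ x', (Pstar x a x' - Phat x a x') * Vh x')
          + ∑ x', Pstar x a x' * (Vs x' - Vh x'))|
      ≤ |Rstar x a - Rhat x a|
        + γ * (|∑ x', (Pstar x a x' - Phat x a x') * Vh x'|
          + |∑ x', Pstar x a x' * (Vs x' - Vh x')|) := by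
        refine le_trans (abs_add_le _ _) ?_
        rw [abs_mul, abs_of_nonneg hγ0]
        exact add_le_add (le_refl _) (mul_le_mul_of_nonneg_left (abs_add_le _ _) hγ0)
    _ ≤ eP x a * ((1 - γ) * Vmax)
        + γ * ((eP x a * Vmax)
          + ((Vmax / (1 - κ * γ)) * (κ * eP x a + ε) + D * Vmax)) := by
        refine add_le_add hA (mul_le_mul_of_nonneg_left ?_ hγ0)
        exact add_le_add hB (le_trans hC key)
    _ = (eP x a / (1 - κ * γ) + D) * Vmax := by
        have h1 := hκγ'.ne'; have h2 := hγ'.ne'; rw [hDdef, mul_comm (1 - γ) (1 - κ * γ), ← div_div]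
        linear_combination (-(eP x a) * Vmax) * (mul_inv_cancel₀ h1) + (-(γ * ε * Vmax * (1 - κ * γ)⁻¹)) * (mul_inv_cancel₀ h2)
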